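/- Let T be a syntactic equality theory and let σ, τ ∈ RSubst both be satisfiable in T, with T ⊢ ∀(σ ↔ τ). Then α_S(σ) = α_S(τ), i.e., the two substitutions have the same abstraction in the domain SFL. -/

import Mathlib

open Classical

noncomputable section

/-- Finite terms over a ranked signature `Sig` (with arity function `ar`)
and variables taken from `Vr`. -/
inductive HTerm (Sig : Type) (ar : Sig → ℕ) (Vr : Type) : Type where
  | var : Vr → HTerm Sig ar Vr
  | app : (f : Sig) → (Fin (ar f) → HTerm Sig ar Vr) → HTerm Sig ar Vr

namespace HTerm

variable {Sig : Type} {ar : Sig → ℕ} {Vr : Type}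

/-- The set of variables occurring in a term. -/
def vars : HTerm Sig ar Vr → Set Vr
  | var x => {x}
  | app _ ts => ⋃ i, (ts i).vars

/-- The number of occurrences of the variable `z` in a term. -/
def count (z : Vr) : HTerm Sig ar Vr → ℕ
  | var x => if x = z then 1 else 0
  | app _ ts => ∑ i, (ts i).count z

/-- Application of a (raw) substitution to a term. -/
def substApp (σ : Vr → HTerm Sig ar Vr) : HTerm Sig ar Vr → HTerm Sig ar Vr
  | var x => σ x
  | app f ts => app f (fun i => (ts i).substApp σ)

end HTerm

/-- A substitution: a map from variables to finite terms that is the identity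
almost everywhere. -/
structure Subst (Sig : Type) (ar : Sig → ℕ) (Vr : Type) where
  toFun : Vr → HTerm Sig ar Vr
  finite_dom : {x : Vr | toFun x ≠ HTerm.var x}.Finite

namespace Subst

variable {Sig : Type} {ar : Sig → ℕ} {Vr : Type}

/-- The domain of a substitution. -/
def dom (σ : Subst Sig ar Vr) : Set Vr := {x | σ.toFun x ≠ HTerm.var x}

/-- The number of bindings `#σ`. -/
def nb (σ : Subst Sig ar Vr) : ℕ := σ.finite_dom.toFinset.card

/-- `iterApp σ i t` is `t σ^i`, the `i`-fold application of `σ` to `t`. -/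
def iterApp (σ : Subst Sig ar Vr) (i : ℕ) (t : HTerm Sig ar Vr) : HTerm Sig ar Vr :=
  (HTerm.substApp σ.toFun)^[i] t

/-- `σ` has a circular subset `{x₁↦x₂, …, x_{n-1}↦xₙ, xₙ↦x₁}` with `n > 1`
distinct variables. -/
def HasCircularSubset (σ : Subst Sig ar Vr) : Prop :=
  ∃ n : ℕ, ∃ _h : 1 < n, ∃ x : Fin n → Vr, Function.Injective x ∧
    ∀ i : Fin n, σ.toFun (x i) = HTerm.var (x ⟨(i.1 + 1) % n, Nat.mod_lt _ (by omega)⟩)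

/-- `σ` is in rational solved form: it has no circular subset. -/
def IsRSubst (σ : Subst Sig ar Vr) : Prop := ¬ σ.HasCircularSubset

/-- The occurrence operator: `occ σ v = {y | v ∈ vars(y σ^n) \ dom σ}` where `n = #σ`. -/
def occ (σ : Subst Sig ar Vr) (v : Vr) : Set Vr :=
  {y | v ∈ (σ.iterApp σ.nb (HTerm.var y)).vars ∧ v ∉ σ.dom}

/-- The freeness operator: `fvars σ = {y | y σ^n ∈ Vars}` where `n = #σ`. -/
def fvars (σ : Subst Sig ar Vr) : Set Vr :=
  {y | ∃ z : Vr, σ.iterApp σ.nb (HTerm.var y) = HTerm.var z}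

/-- The groundness operator. -/
def gvars (σ : Subst Sig ar Vr) : Set Vr :=
  {y | y ∈ σ.dom ∧ ∀ v : Vr, y ∉ σ.occ v}

/-- The linearity operator: every non-domain variable of `y σ^n` occurs exactly
once in `y σ^{2n}`, where `n = #σ`. -/
def lvars (σ : Subst Sig ar Vr) : Set Vr :=
  {y | ∀ z ∈ (σ.iterApp σ.nb (HTerm.var y)).vars, z ∉ σ.dom →
        (σ.iterApp (2 * σ.nb) (HTerm.var y)).count z = 1}

/-- The sharing-sets operator: `ssets σ VI = {occ(σ,v) ∩ VI | v ∈ Vars} \ {∅}`. -/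
def ssets (σ : Subst Sig ar Vr) (VI : Set Vr) : Set (Set Vr) :=
  {g | (∃ v : Vr, g = σ.occ v ∩ VI) ∧ g ≠ ∅}

/-- The set of variables occurring in (the bindings of) a substitution. -/
def varsOf (σ : Subst Sig ar Vr) : Set Vr :=
  ⋃ x ∈ σ.dom, ({x} ∪ (σ.toFun x).vars)

end Subst

/-- The set `SG` of sharing groups over `VI`: nonempty subsets of `VI`. -/
def SG {Vr : Type} (VI : Set Vr) : Set (Set Vr) := {S | S ⊆ VI ∧ S ≠ ∅}

/-- An element of the abstract domain `SFL`: a set-sharing component together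
with a freeness and a linearity component. -/
structure SFLElem (Vr : Type) where
  sh : Set (Set Vr)
  f : Set Vr
  l : Set Vr

/-- Well-formedness of an `SFL` element: `sh ∈ SH = ℘(SG VI)`, `f ⊆ VI`, `l ⊆ VI`. -/
def SFLElem.WF {Vr : Type} (VI : Set Vr) (d : SFLElem Vr) : Prop :=
  d.sh ⊆ SG VI ∧ d.f ⊆ VI ∧ d.l ⊆ VI

/-- The bottom element `⊥_S = ⟨∅, VI, VI⟩` of `SFL`. -/
def botS {Vr : Type} (VI : Set Vr) : SFLElem Vr := ⟨∅, VI, VI⟩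

/-- The order of `SFL`: `⊆` on the sharing component, `⊇` on freeness and linearity. -/
def SFLElem.leS {Vr : Type} (d1 d2 : SFLElem Vr) : Prop :=
  d1.sh ⊆ d2.sh ∧ d2.f ⊆ d1.f ∧ d2.l ⊆ d1.l

/-- The least upper bound of `SFL`. -/
def SFLElem.lubS {Vr : Type} (d1 d2 : SFLElem Vr) : SFLElem Vr :=
  ⟨d1.sh ∪ d2.sh, d1.f ∩ d2.f, d1.l ∩ d2.l⟩

/-- The abstraction function `α_S` on a single substitution. -/
def alphaS {Sig : Type} {ar : Sig → ℕ} {Vr : Type} (VI : Set Vr)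
    (σ : Subst Sig ar Vr) : SFLElem Vr :=
  ⟨σ.ssets VI, σ.fvars ∩ VI, σ.lvars ∩ VI⟩

/-- The abstraction function `α_S` on a set of substitutions (the lub of the
pointwise abstractions). -/
def alphaSetS {Sig : Type} {ar : Sig → ℕ} {Vr : Type} (VI : Set Vr)
    (Ss : Set (Subst Sig ar Vr)) : SFLElem Vr :=
  ⟨⋃ σ ∈ Ss, σ.ssets VI,
   {x | x ∈ VI ∧ ∀ σ ∈ Ss, x ∈ σ.fvars},
   {x | x ∈ VI ∧ ∀ σ ∈ Ss, x ∈ σ.lvars}⟩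

/-- The concretization function `γ_S`. -/
def gammaS (Sig : Type) (ar : Sig → ℕ) {Vr : Type} (VI : Set Vr)
    (d : SFLElem Vr) : Set (Subst Sig ar Vr) :=
  {σ | σ.IsRSubst ∧ σ.ssets VI ⊆ d.sh ∧ d.f ⊆ σ.fvars ∧ d.l ⊆ σ.lvars}

/-- A first-order interpretation (model) of the signature: a carrier together
with an interpretation of each function symbol. -/
structure Interp (Sig : Type) (ar : Sig → ℕ) : Type 1 where
  carrier : Type
  interp : (f : Sig) → (Fin (ar f) → carrier) → carrier

namespace Interp

variable {Sig : Type} {ar : Sig → ℕ} {Vr : Type}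

/-- Evaluation of a term in an interpretation under a valuation of the variables. -/
def eval (M : Interp Sig ar) (ν : Vr → M.carrier) : HTerm Sig ar Vr → M.carrier
  | HTerm.var x => ν x
  | HTerm.app f ts => M.interp f (fun i => M.eval ν (ts i))

/-- `M` satisfies the identity axioms: function symbols are injective and
terms with distinct outermost function symbols are unequal. -/
def SatisfiesIdentity (M : Interp Sig ar) : Prop :=
  (∀ (f : Sig) (a b : Fin (ar f) → M.carrier), M.interp f a = M.interp f b → a = b) ∧
  (∀ (f g : Sig) (a : Fin (ar f) → M.carrier) (b : Fin (ar g) → M.carrier),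
      f ≠ g → M.interp f a ≠ M.interp g b)

/-- `M` satisfies a set of equations under a valuation. -/
def SatEqs (M : Interp Sig ar) (ν : Vr → M.carrier)
    (e : Set (HTerm Sig ar Vr × HTerm Sig ar Vr)) : Prop :=
  ∀ p ∈ e, M.eval ν p.1 = M.eval ν p.2

/-- `M` satisfies the occurs-check axioms (for variables in `Vr`). -/
def SatisfiesOC (M : Interp Sig ar) (Vr : Type) : Prop :=
  ∀ (t : HTerm Sig ar Vr) (z : Vr), (∀ y : Vr, t ≠ HTerm.var y) → z ∈ t.vars →
    ∀ ν : Vr → M.carrier, M.eval ν t ≠ ν z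

end Interp

/-- The set of equations corresponding to a substitution:
`{x = σ(x) | x ∈ dom σ}`. -/
def eqsOf {Sig : Type} {ar : Sig → ℕ} {Vr : Type} (σ : Subst Sig ar Vr) :
    Set (HTerm Sig ar Vr × HTerm Sig ar Vr) :=
  {p | ∃ x ∈ σ.dom, p = (HTerm.var x, σ.toFun x)}

/-- A theory is identified (semantically) with its class of models; a
syntactic equality theory is a consistent theory all of whose models
satisfy the (congruence and) identity axioms. -/
def IsSyntacticTheory {Sig : Type} {ar : Sig → ℕ} (T : Set (Interp Sig ar)) : Prop :=
  T.Nonempty ∧ ∀ M ∈ T, M.SatisfiesIdentity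

/-- `σ` is satisfiable in `T`: in every model of `T`, every valuation of the
non-domain variables extends to a valuation satisfying `σ`;
semantically, `T ⊢ ∀ (Vars \ dom σ) : ∃ dom σ . σ`. -/
def SatisfiableIn {Sig : Type} {ar : Sig → ℕ} {Vr : Type}
    (T : Set (Interp Sig ar)) (σ : Subst Sig ar Vr) : Prop :=
  ∀ M ∈ T, ∀ ν : Vr → M.carrier, ∃ ν' : Vr → M.carrier,
    (∀ x ∉ σ.dom, ν' x = ν x) ∧ M.SatEqs ν' (eqsOf σ)

/-- `T ⊢ ∀ (σ ↔ τ)`, semantically. -/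
def EquivIn {Sig : Type} {ar : Sig → ℕ} {Vr : Type}
    (T : Set (Interp Sig ar)) (σ τ : Subst Sig ar Vr) : Prop :=
  ∀ M ∈ T, ∀ ν : Vr → M.carrier, M.SatEqs ν (eqsOf σ) ↔ M.SatEqs ν (eqsOf τ)

/- ===================== Infrastructure: occurrences in terms ===================== -/

section Infra

variable {Sig : Type} {ar : Sig → ℕ} {Vr : Type}

/-- `OccAt t p z`: the variable `z` occurs in `t` at position `p`. -/
inductive OccAt : HTerm Sig ar Vr → List ℕ → Vr → Prop
  | var (z : Vr) : OccAt (HTerm.var z) [] z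
  | app {f : Sig} {ts : Fin (ar f) → HTerm Sig ar Vr} (i : ℕ) (h : i < ar f)
      {p : List ℕ} {z : Vr} :
      OccAt (ts ⟨i, h⟩) p z → OccAt (HTerm.app f ts) (i :: p) z

/-- `SubAt t p t'`: `t'` is the subterm of `t` at position `p`. -/
inductive SubAt : HTerm Sig ar Vr → List ℕ → HTerm Sig ar Vr → Prop
  | nil (t : HTerm Sig ar Vr) : SubAt t [] t
  | app {f : Sig} {ts : Fin (ar f) → HTerm Sig ar Vr} (i : ℕ) (h : i < ar f)
      {p : List ℕ} {t' : HTerm Sig ar Vr} :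
      SubAt (ts ⟨i, h⟩) p t' → SubAt (HTerm.app f ts) (i :: p) t'

theorem occAt_mem_vars {t : HTerm Sig ar Vr} {p : List ℕ} {z : Vr}
    (h : OccAt t p z) : z ∈ t.vars := by
  induction h with
  | var z => exact rfl
  | app i hi _ ih => exact Set.mem_iUnion.2 ⟨⟨i, hi⟩, ih⟩

theorem exists_occAt_of_mem_vars {t : HTerm Sig ar Vr} {z : Vr}
    (h : z ∈ t.vars) : ∃ p, OccAt t p z := by
  induction t with
  | var x =>
    rcases h with rfl
    exact ⟨[], OccAt.var z⟩
  | app f ts ih =>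
    rcases Set.mem_iUnion.1 h with ⟨i, hi⟩
    rcases ih i hi with ⟨p, hp⟩
    exact ⟨i.1 :: p, OccAt.app i.1 i.2 hp⟩

theorem occAt_var_iff {x z : Vr} {p : List ℕ} :
    OccAt (HTerm.var x : HTerm Sig ar Vr) p z ↔ p = [] ∧ z = x := by
  constructor
  · intro h; cases h; exact ⟨rfl, rfl⟩
  · rintro ⟨rfl, rfl⟩; exact OccAt.var z

theorem occAt_functional {t : HTerm Sig ar Vr} {p : List ℕ} {z z' : Vr}
    (h : OccAt t p z) (h' : OccAt t p z') : z = z' := by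
  induction h generalizing z' with
  | var z => cases h'; rfl
  | app i hi _ ih => cases h' with | app _ _ hoc => exact ih hoc

/-- Positions of occurrences in a common term are pairwise incomparable. -/
theorem occAt_append_ne {t : HTerm Sig ar Vr} {p q : List ℕ} {z w : Vr}
    (hp : OccAt t p z) (hq : OccAt t q w) (hne : p ≠ q) :
    ∀ a b : List ℕ, p ++ a ≠ q ++ b := by
  induction hp generalizing q w with
  | var z => cases hq; exact absurd rfl hne
  | app i hi hoc ih =>
    cases hq with
    | app j hj hoc' =>
      intro a b hab
      simp only [List.cons_append, List.cons.injEq] at hab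
      rcases hab with ⟨rfl, hab⟩
      exact ih hoc' (fun h => hne (by rw [h])) a b hab

/-- depth of a term -/
def hdepth : HTerm Sig ar Vr → ℕ
  | .var _ => 0
  | .app _ ts => (Finset.univ.sup fun i => hdepth (ts i)) + 1

theorem hdepth_child {f : Sig} {ts : Fin (ar f) → HTerm Sig ar Vr} (i : Fin (ar f)) :
    hdepth (ts i) + 1 ≤ hdepth (HTerm.app f ts) := by
  have h : hdepth (ts i) ≤ Finset.univ.sup fun j => hdepth (ts j) :=
    Finset.le_sup (f := fun j => hdepth (ts j)) (Finset.mem_univ i)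
  simpa [hdepth] using Nat.add_le_add_right h 1

theorem occAt_length_le_hdepth {t : HTerm Sig ar Vr} {p : List ℕ} {z : Vr}
    (h : OccAt t p z) : p.length ≤ hdepth t := by
  induction h with
  | var z => simp [hdepth]
  | app i hi hoc ih =>
    rw [List.length_cons]
    exact le_trans (Nat.add_le_add_right ih 1) (hdepth_child ⟨i, hi⟩)

theorem one_le_count_iff {t : HTerm Sig ar Vr} {z : Vr} :
    1 ≤ t.count z ↔ ∃ p, OccAt t p z := by
  induction t with
  | var x =>
    simp only [HTerm.count]
    by_cases h : x = z
    · subst h; simp [occAt_var_iff]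
    · rw [if_neg h]
      refine ⟨fun h1 => absurd h1 (by omega), ?_⟩
      rintro ⟨p, hp⟩
      rw [occAt_var_iff] at hp
      exact absurd hp.2.symm h
  | app f ts ih =>
    simp only [HTerm.count]
    constructor
    · intro h
      have hex : ∃ i, (ts i).count z ≠ 0 := by
        by_contra hc
        push_neg at hc
        rw [Finset.sum_eq_zero (fun i _ => hc i)] at h
        omega
      rcases hex with ⟨i, hi⟩
      rcases (ih i).1 (Nat.one_le_iff_ne_zero.2 hi) with ⟨p, hp⟩
      exact ⟨i.1 :: p, OccAt.app i.1 i.2 hp⟩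
    · rintro ⟨p, hp⟩
      cases hp with
      | app i hi hoc =>
        have h1 : 1 ≤ (ts ⟨i, hi⟩).count z := (ih _).2 ⟨_, hoc⟩
        calc 1 ≤ (ts ⟨i, hi⟩).count z := h1
          _ ≤ ∑ j, (ts j).count z :=
            Finset.single_le_sum (f := fun j => (ts j).count z)
              (fun j _ => Nat.zero_le _) (Finset.mem_univ _)

theorem two_le_count_iff {t : HTerm Sig ar Vr} {z : Vr} :
    2 ≤ t.count z ↔ ∃ p q, p ≠ q ∧ OccAt t p z ∧ OccAt t q z := by
  induction t with
  | var x =>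
    constructor
    · intro h
      simp only [HTerm.count] at h
      by_cases hx : x = z <;> simp [hx] at h
    · rintro ⟨p, q, hne, hp, hq⟩
      rw [occAt_var_iff] at hp hq
      exact absurd (hp.1.trans hq.1.symm) hne
  | app f ts ih =>
    simp only [HTerm.count]
    constructor
    · intro h
      rcases (show (∃ i, 2 ≤ (ts i).count z) ∨
          (∃ i j, i ≠ j ∧ 1 ≤ (ts i).count z ∧ 1 ≤ (ts j).count z) by
        by_contra hc
        push_neg at hc
        obtain ⟨h1, h2⟩ := hc
        by_cases hz : ∀ i, (ts i).count z = 0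
        · rw [Finset.sum_eq_zero (fun i _ => hz i)] at h; omega
        · push_neg at hz
          rcases hz with ⟨i0, hi0⟩
          have hsum : ∑ j, (ts j).count z = (ts i0).count z := by
            apply Finset.sum_eq_single_of_mem i0 (Finset.mem_univ _)
            intro j _ hj
            have hj2 := h2 j i0 hj
            omega
          have hle := h1 i0
          omega) with h' | h'
      · rcases h' with ⟨i, hi⟩
        rcases (ih i).1 hi with ⟨p, q, hne, hp, hq⟩
        exact ⟨i.1 :: p, i.1 :: q, by simpa using hne,
          OccAt.app i.1 i.2 hp, OccAt.app i.1 i.2 hq⟩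
      · rcases h' with ⟨i, j, hij, hi, hj⟩
        rcases one_le_count_iff.1 hi with ⟨p, hp⟩
        rcases one_le_count_iff.1 hj with ⟨q, hq⟩
        refine ⟨i.1 :: p, j.1 :: q, ?_, OccAt.app i.1 i.2 hp, OccAt.app j.1 j.2 hq⟩
        intro hcon
        simp only [List.cons.injEq] at hcon
        exact hij (Fin.ext hcon.1)
    · rintro ⟨p, q, hne, hp, hq⟩
      cases hp with
      | @app _ _ i hi p' _ hpi =>
        cases hq with
        | @app _ _ j hj q' _ hqj =>
          by_cases hij : (⟨i, hi⟩ : Fin (ar f)) = ⟨j, hj⟩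
          · have hij' : i = j := congrArg Fin.val hij
            have hj2 : OccAt (ts ⟨i, hi⟩) q' z := by rw [hij]; exact hqj
            have hpq : p' ≠ q' := fun hcon => hne (by rw [hij', hcon])
            have h2 : 2 ≤ (ts ⟨i, hi⟩).count z := (ih _).2 ⟨_, _, hpq, hpi, hj2⟩
            calc 2 ≤ (ts ⟨i, hi⟩).count z := h2
              _ ≤ ∑ k, (ts k).count z :=
                Finset.single_le_sum (f := fun k => (ts k).count z)
                  (fun k _ => Nat.zero_le _) (Finset.mem_univ _)
          · have h1 : 1 ≤ (ts ⟨i, hi⟩).count z := one_le_count_iff.2 ⟨_, hpi⟩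
            have h2 : 1 ≤ (ts ⟨j, hj⟩).count z := one_le_count_iff.2 ⟨_, hqj⟩
            calc 2 ≤ (ts ⟨i, hi⟩).count z + (ts ⟨j, hj⟩).count z := by omega
              _ = ∑ k ∈ ({⟨i, hi⟩, ⟨j, hj⟩} : Finset (Fin (ar f))), (ts k).count z :=
                (Finset.sum_pair (f := fun k => (ts k).count z) hij).symm
              _ ≤ ∑ k, (ts k).count z :=
                Finset.sum_le_sum_of_subset (Finset.subset_univ _)

/-- Decomposition of occurrences under substitution application. -/
theorem occAt_substApp {s : Vr → HTerm Sig ar Vr} {t : HTerm Sig ar Vr} {P : List ℕ} {z : Vr} :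
    OccAt (t.substApp s) P z ↔ ∃ q u r, P = q ++ r ∧ OccAt t q u ∧ OccAt (s u) r z := by
  induction t generalizing P with
  | var x =>
    constructor
    · intro h; exact ⟨[], x, P, rfl, OccAt.var x, h⟩
    · rintro ⟨q, u, r, rfl, hq, hr⟩
      rw [occAt_var_iff] at hq
      rcases hq with ⟨rfl, rfl⟩
      exact hr
  | app f ts ih =>
    constructor
    · intro h
      cases h with
      | app i hi hoc =>
        rcases (ih ⟨i, hi⟩).1 hoc with ⟨q, u, r, hP, hq, hr⟩
        exact ⟨i :: q, u, r, by rw [hP]; rfl, OccAt.app i hi hq, hr⟩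
    · rintro ⟨q, u, r, hP, hq, hr⟩
      cases hq with
      | app i hi hoc =>
        subst hP
        exact OccAt.app i hi ((ih ⟨i, hi⟩).2 ⟨_, u, r, rfl, hoc, hr⟩)

theorem subAt_of_occAt_append {t : HTerm Sig ar Vr} {q r : List ℕ} {v : Vr}
    (h : OccAt t (q ++ r) v) : ∃ t', SubAt t q t' ∧ OccAt t' r v := by
  induction q generalizing t with
  | nil => exact ⟨t, SubAt.nil t, h⟩
  | cons i q ih =>
    cases h with
    | app _ hi hoc =>
      rcases ih hoc with ⟨t', h1, h2⟩
      exact ⟨t', SubAt.app i hi h1, h2⟩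

end Infra
/- ===================== Substitution chains ===================== -/

section Chains

variable {Sig : Type} {ar : Sig → ℕ} {Vr : Type}

/-- `y σ^k` as a term. -/
def itv (σ : Subst Sig ar Vr) (k : ℕ) (y : Vr) : HTerm Sig ar Vr :=
  σ.iterApp k (HTerm.var y)

theorem toFun_eq_var {σ : Subst Sig ar Vr} {y : Vr} (h : y ∉ σ.dom) :
    σ.toFun y = HTerm.var y := not_not.1 h

theorem iterApp_succ_left (σ : Subst Sig ar Vr) (k : ℕ) (t : HTerm Sig ar Vr) :
    σ.iterApp (k+1) t = σ.iterApp k (t.substApp σ.toFun) :=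
  Function.iterate_succ_apply _ _ _

theorem iterApp_succ_right (σ : Subst Sig ar Vr) (k : ℕ) (t : HTerm Sig ar Vr) :
    σ.iterApp (k+1) t = (σ.iterApp k t).substApp σ.toFun :=
  Function.iterate_succ_apply' _ _ _

theorem occAt_nil_iff {t : HTerm Sig ar Vr} {z : Vr} :
    OccAt t [] z ↔ t = HTerm.var z := by
  constructor
  · intro h; cases h; rfl
  · rintro rfl; exact OccAt.var z

/-- Chains of occurrences through iterated substitution. -/
inductive SChain (σ : Subst Sig ar Vr) : Vr → List ℕ → ℕ → Vr → Prop
  | nil (u : Vr) : SChain σ u [] 0 u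
  | cons {u : Vr} {r : List ℕ} {w : Vr} {p : List ℕ} {k : ℕ} {z : Vr} :
      OccAt (σ.toFun u) r w → SChain σ w p k z → SChain σ u (r ++ p) (k+1) z

theorem schain_zero_iff {σ : Subst Sig ar Vr} {u P z} :
    SChain σ u P 0 z ↔ P = [] ∧ z = u := by
  constructor
  · intro h; cases h; exact ⟨rfl, rfl⟩
  · rintro ⟨rfl, rfl⟩; exact SChain.nil _

theorem schain_succ_iff {σ : Subst Sig ar Vr} {u P k z} :
    SChain σ u P (k+1) z ↔
      ∃ r w p, P = r ++ p ∧ OccAt (σ.toFun u) r w ∧ SChain σ w p k z := by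
  constructor
  · intro h; cases h with | cons ho hc => exact ⟨_, _, _, rfl, ho, hc⟩
  · rintro ⟨r, w, p, rfl, ho, hc⟩; exact SChain.cons ho hc

theorem occAt_iterApp_iff {σ : Subst Sig ar Vr} {k : ℕ} {t : HTerm Sig ar Vr} {P : List ℕ} {z : Vr} :
    OccAt (σ.iterApp k t) P z ↔
      ∃ q u r, P = q ++ r ∧ OccAt t q u ∧ SChain σ u r k z := by
  induction k generalizing t P with
  | zero =>
    constructor
    · intro h; exact ⟨P, z, [], (List.append_nil P).symm, h, SChain.nil z⟩
    · rintro ⟨q, u, r, rfl, hq, hc⟩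
      rw [schain_zero_iff] at hc
      rcases hc with ⟨rfl, rfl⟩
      simpa [Subst.iterApp] using hq
  | succ k ih =>
    rw [iterApp_succ_left]
    constructor
    · intro h
      rcases ih.1 h with ⟨q', u', r', rfl, hq', hc'⟩
      rcases occAt_substApp.1 hq' with ⟨q, u, r0, rfl, hq, hr0⟩
      exact ⟨q, u, r0 ++ r', by rw [List.append_assoc], hq, SChain.cons hr0 hc'⟩
    · rintro ⟨q, u, R, rfl, hq, hc⟩
      rw [schain_succ_iff] at hc
      rcases hc with ⟨r0, w, p', rfl, ho, hc⟩
      refine ih.2 ⟨q ++ r0, w, p', by rw [List.append_assoc], ?_, hc⟩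
      exact occAt_substApp.2 ⟨q, u, r0, rfl, hq, ho⟩

theorem occAt_itv_iff {σ : Subst Sig ar Vr} {k : ℕ} {y : Vr} {P : List ℕ} {z : Vr} :
    OccAt (itv σ k y) P z ↔ SChain σ y P k z := by
  rw [itv, occAt_iterApp_iff]
  constructor
  · rintro ⟨q, u, r, rfl, hq, hc⟩
    rw [occAt_var_iff] at hq
    rcases hq with ⟨rfl, rfl⟩
    simpa using hc
  · intro h
    exact ⟨[], y, P, rfl, OccAt.var y, h⟩

theorem schain_glue {σ : Subst Sig ar Vr} {u w z : Vr} {a b : List ℕ} {k1 k2 : ℕ}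
    (h1 : SChain σ u a k1 w) (h2 : SChain σ w b k2 z) :
    SChain σ u (a ++ b) (k1 + k2) z := by
  induction h1 with
  | nil u => simpa using h2
  | @cons u' r' w' p' k' z' ho hc ih =>
    rw [List.append_assoc]
    have h3 := SChain.cons ho (ih h2)
    have he : k' + k2 + 1 = k' + 1 + k2 := by omega
    rw [he] at h3
    exact h3

theorem schain_split {σ : Subst Sig ar Vr} {u z : Vr} {P : List ℕ} {k1 k2 : ℕ}
    (h : SChain σ u P (k1 + k2) z) :
    ∃ p1 w p2, P = p1 ++ p2 ∧ SChain σ u p1 k1 w ∧ SChain σ w p2 k2 z := by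
  induction k1 generalizing u P with
  | zero => exact ⟨[], u, P, rfl, SChain.nil u, by simpa using h⟩
  | succ k1 ih =>
    have h' : SChain σ u P ((k1 + k2) + 1) z := by
      have : k1 + 1 + k2 = (k1 + k2) + 1 := by omega
      rwa [this] at h
    rw [schain_succ_iff] at h'
    rcases h' with ⟨r, w0, p', rfl, ho, hc⟩
    rcases ih hc with ⟨p1, w, p2, rfl, hc1, hc2⟩
    exact ⟨r ++ p1, w, p2, by rw [List.append_assoc], SChain.cons ho hc1, hc2⟩

theorem schain_nondom_const {σ : Subst Sig ar Vr} {u z : Vr} {P : List ℕ} {k : ℕ}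
    (h : SChain σ u P k z) (hu : u ∉ σ.dom) : z = u ∧ P = [] := by
  induction h with
  | nil u => exact ⟨rfl, rfl⟩
  | cons ho hc ih =>
    rw [toFun_eq_var hu, occAt_var_iff] at ho
    rcases ho with ⟨rfl, rfl⟩
    rcases ih hu with ⟨rfl, rfl⟩
    exact ⟨rfl, rfl⟩

theorem schain_pad {σ : Subst Sig ar Vr} {z : Vr} (hz : z ∉ σ.dom) (d : ℕ) :
    SChain σ z [] d z := by
  induction d with
  | zero => exact SChain.nil z
  | succ d ih =>
    have ho : OccAt (σ.toFun z) [] z := by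
      rw [toFun_eq_var hz]; exact OccAt.var z
    simpa using SChain.cons ho ih

/-- deterministic variable step -/
noncomputable def vstep (σ : Subst Sig ar Vr) : Vr → Vr := fun u =>
  if h : ∃ w, σ.toFun u = HTerm.var w then Classical.choose h else u

theorem vstep_spec {σ : Subst Sig ar Vr} {u w : Vr} (h : σ.toFun u = HTerm.var w) :
    vstep σ u = w := by
  rw [vstep, dif_pos ⟨w, h⟩]
  have hcs := Classical.choose_spec (⟨w, h⟩ : ∃ w, σ.toFun u = HTerm.var w)
  injection hcs.symm.trans h

theorem vstep_nondom {σ : Subst Sig ar Vr} {u : Vr} (h : u ∉ σ.dom) : vstep σ u = u :=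
  vstep_spec (toFun_eq_var h)

theorem schain_nil_vstep {σ : Subst Sig ar Vr} {u z : Vr} {k : ℕ}
    (h : SChain σ u [] k z) :
    z = (vstep σ)^[k] u ∧
      ∀ i < k, σ.toFun ((vstep σ)^[i] u) = HTerm.var ((vstep σ)^[i+1] u) := by
  induction k generalizing u with
  | zero =>
    rw [schain_zero_iff] at h
    exact ⟨h.2, fun i hi => absurd hi (by omega)⟩
  | succ k ih =>
    rw [schain_succ_iff] at h
    rcases h with ⟨r, w, p, hrp, ho, hc⟩
    have hr : r = [] ∧ p = [] := List.append_eq_nil_iff.1 hrp.symm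
    rcases hr with ⟨rfl, rfl⟩
    rw [occAt_nil_iff] at ho
    have hw : vstep σ u = w := vstep_spec ho
    rcases ih hc with ⟨hz, hsteps⟩
    constructor
    · rw [Function.iterate_succ_apply, hw]; exact hz
    · intro i hi
      match i with
      | 0 =>
        simp only [Function.iterate_zero, id_eq, zero_add, Function.iterate_one]
        rw [ho, hw]
      | (j+1) =>
        have := hsteps j (by omega)
        rw [Function.iterate_succ_apply, Function.iterate_succ_apply, hw]
        exact this

end Chains
/- ===================== Chain surgery ===================== -/

section Chains2

variable {Sig : Type} {ar : Sig → ℕ} {Vr : Type}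

theorem purevar_bound {σ : Subst Sig ar Vr} (hR : σ.IsRSubst) {u z : Vr} {k : ℕ}
    (hc : SChain σ u [] k z) (hz : z ∈ σ.dom) : k < σ.nb := by
  classical
  obtain ⟨hzeq, hstep⟩ := schain_nil_vstep hc
  by_contra hk
  push_neg at hk
  set n := σ.nb with hn
  have hnbcard : σ.finite_dom.toFinset.card = n := rfl
  have hdom : ∀ i, i ≤ k → (vstep σ)^[i] u ∈ σ.dom := by
    intro i hik
    by_contra hnd
    have hconst : ∀ d, (vstep σ)^[i + d] u = (vstep σ)^[i] u := by
      intro d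
      induction d with
      | zero => rfl
      | succ d ihd =>
        have h1 : (vstep σ)^[i + (d+1)] u = vstep σ ((vstep σ)^[i+d] u) := by
          rw [show i + (d+1) = (i+d) + 1 by omega, Function.iterate_succ_apply']
        rw [h1, ihd, vstep_nondom hnd]
    have hzz : z = (vstep σ)^[i] u := by
      rw [hzeq, show k = i + (k - i) by omega, hconst (k - i)]
    exact hnd (hzz ▸ hz)
  have hcard : σ.finite_dom.toFinset.card < (Finset.univ : Finset (Fin (n+1))).card := by
    rw [Finset.card_univ, Fintype.card_fin, hnbcard]
    omega
  obtain ⟨i1, -, i2, -, hne, heq⟩ :=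
    Finset.exists_ne_map_eq_of_card_lt_of_maps_to (f := fun i : Fin (n+1) => (vstep σ)^[i.1] u)
      hcard
      (fun i _ => (σ.finite_dom.mem_toFinset).2 (hdom i.1 (le_trans (Nat.lt_succ_iff.1 i.2) hk)))
  have key : ∀ (a b : Fin (n+1)), a < b → (vstep σ)^[a.1] u = (vstep σ)^[b.1] u → False := by
    intro a b hab hfeq
    have hab' : a.1 < b.1 := hab
    have hb2 := b.2
    set b0 := (vstep σ)^[a.1] u with hb0
    set c := b.1 - a.1 with hcdef
    have hc1 : 0 < c := by omega
    have hcycle : (vstep σ)^[c] b0 = b0 := by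
      rw [hb0, ← Function.iterate_add_apply, show c + a.1 = b.1 by omega, ← hfeq]
    have hex : ∃ c', 0 < c' ∧ (vstep σ)^[c'] b0 = b0 := ⟨c, hc1, hcycle⟩
    obtain ⟨hc0pos, hc0cyc⟩ := Nat.find_spec hex
    set c0 := Nat.find hex with hc0def
    have hc0le : c0 ≤ c := Nat.find_min' hex ⟨hc1, hcycle⟩
    have hbstep : ∀ j < c0, σ.toFun ((vstep σ)^[j] b0) = HTerm.var ((vstep σ)^[j+1] b0) := by
      intro j hj
      have h1 : (vstep σ)^[j] b0 = (vstep σ)^[j + a.1] u := by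
        rw [hb0, ← Function.iterate_add_apply]
      have h2 : (vstep σ)^[j+1] b0 = (vstep σ)^[(j + a.1)+1] u := by
        rw [hb0, ← Function.iterate_add_apply]
        congr 1
        omega
      rw [h1, h2]
      exact hstep (j + a.1) (by omega)
    rcases Nat.lt_or_ge 1 c0 with hc0gt | hc0le1
    · apply hR
      refine ⟨c0, hc0gt, fun j : Fin c0 => (vstep σ)^[j.1] b0, ?_, ?_⟩
      · intro j1 j2 hj12
        by_contra hne'
        have key2 : ∀ (s t : Fin c0), s < t →
            (vstep σ)^[s.1] b0 = (vstep σ)^[t.1] b0 → False := by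
          intro s t hst hfeq2
          have hst' : s.1 < t.1 := hst
          have ht2 := t.2
          have hcyc' : (vstep σ)^[c0 - t.1 + s.1] b0 = b0 := by
            rw [Function.iterate_add_apply, hfeq2, ← Function.iterate_add_apply,
              show c0 - t.1 + t.1 = c0 by omega]
            exact hc0cyc
          exact (Nat.find_min hex (m := c0 - t.1 + s.1) (by omega)) ⟨by omega, hcyc'⟩
        rcases Ne.lt_or_gt hne' with h | h
        · exact key2 _ _ h hj12
        · exact key2 _ _ h hj12.symm
      · intro j
        have hj2 := j.2
        by_cases hj : j.1 + 1 < c0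
        · have hb := hbstep j.1 (by omega)
          simp only []
          rw [hb, Nat.mod_eq_of_lt hj]
        · have hj1 : j.1 + 1 = c0 := by omega
          have hb := hbstep j.1 (by omega)
          simp only []
          rw [hb, hj1, Nat.mod_self, hc0cyc]
          simp
    · -- c0 = 1 : a variable bound to itself, contradiction with dom membership
      have hc01 : c0 = 1 := by omega
      have hstep0 := hbstep 0 (by omega)
      simp only [Function.iterate_zero, id_eq, zero_add, Function.iterate_one] at hstep0
      have hfix : vstep σ b0 = b0 := by
        have h5 := hc0cyc
        rw [hc01] at h5
        simpa using h5
      have hb0dom : b0 ∈ σ.dom := hdom a.1 (by omega)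
      exact hb0dom (by rw [hstep0, hfix])
  rcases Ne.lt_or_gt hne with h | h
  · exact key _ _ h heq
  · exact key _ _ h heq.symm

theorem schain_shorten_nondom {σ : Subst Sig ar Vr} {u z : Vr} (hz : z ∉ σ.dom) :
    ∀ (k : ℕ) (P : List ℕ), SChain σ u P k z → ∃ P' k', k' ≤ σ.nb ∧ SChain σ u P' k' z := by
  intro k
  induction k using Nat.strong_induction_on with
  | _ k ih =>
    intro P hc
    by_cases hk : k ≤ σ.nb
    · exact ⟨P, k, hk, hc⟩
    · push_neg at hk
      set n := σ.nb with hn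
      have hsplits : ∀ i : Fin (n+1), ∃ p1 w p2, P = p1 ++ p2 ∧
          SChain σ u p1 i.1 w ∧ SChain σ w p2 (k - i.1) z := by
        intro i
        have hi2 := i.2
        have hkk : k = i.1 + (k - i.1) := by omega
        rw [hkk] at hc
        exact schain_split hc
      choose p1f wf p2f hPf h1f h2f using hsplits
      by_cases hnd : ∀ i : Fin (n+1), wf i ∈ σ.dom
      · have hnbcard : σ.finite_dom.toFinset.card = n := rfl
        have hcard : σ.finite_dom.toFinset.card < (Finset.univ : Finset (Fin (n+1))).card := by
          rw [Finset.card_univ, Fintype.card_fin, hnbcard]; omega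
        obtain ⟨i1, -, i2, -, hne, heq⟩ :=
          Finset.exists_ne_map_eq_of_card_lt_of_maps_to (f := wf) hcard
            (fun i _ => (σ.finite_dom.mem_toFinset).2 (hnd i))
        have key : ∀ s t : Fin (n+1), s < t → wf s = wf t →
            ∃ P' k', k' ≤ σ.nb ∧ SChain σ u P' k' z := by
          intro s t hst hw
          have hst' : s.1 < t.1 := hst
          have ht2 := t.2
          have hglue := schain_glue (h1f s) (by rw [hw]; exact h2f t)
          exact ih (s.1 + (k - t.1)) (by omega) _ hglue
        rcases Ne.lt_or_gt hne with h | h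
        · exact key _ _ h heq
        · exact key _ _ h heq.symm
      · push_neg at hnd
        rcases hnd with ⟨i, hi⟩
        obtain ⟨hz2, -⟩ := schain_nondom_const (h2f i) hi
        have hi2 := i.2
        refine ⟨p1f i, i.1, by omega, ?_⟩
        rw [hz2]
        exact h1f i

theorem schain_shorten_dom {σ : Subst Sig ar Vr} {u c : Vr} (hcd : c ∈ σ.dom) :
    ∀ (k : ℕ) (P : List ℕ), SChain σ u P k c → ∃ P' k', k' < σ.nb ∧ SChain σ u P' k' c := by
  intro k
  induction k using Nat.strong_induction_on with
  | _ k ih =>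
    intro P hc
    by_cases hk : k < σ.nb
    · exact ⟨P, k, hk, hc⟩
    · push_neg at hk
      set n := σ.nb with hn
      have hsplits : ∀ i : Fin (n+1), ∃ p1 w p2, P = p1 ++ p2 ∧
          SChain σ u p1 i.1 w ∧ SChain σ w p2 (k - i.1) c := by
        intro i
        have hi2 := i.2
        have hkk : k = i.1 + (k - i.1) := by omega
        rw [hkk] at hc
        exact schain_split hc
      choose p1f wf p2f hPf h1f h2f using hsplits
      have hnd : ∀ i : Fin (n+1), wf i ∈ σ.dom := by
        intro i
        by_contra hni
        obtain ⟨hz2, -⟩ := schain_nondom_const (h2f i) hni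
        exact hni (hz2 ▸ hcd)
      have hnbcard : σ.finite_dom.toFinset.card = n := rfl
      have hcard : σ.finite_dom.toFinset.card < (Finset.univ : Finset (Fin (n+1))).card := by
        rw [Finset.card_univ, Fintype.card_fin, hnbcard]; omega
      obtain ⟨i1, -, i2, -, hne, heq⟩ :=
        Finset.exists_ne_map_eq_of_card_lt_of_maps_to (f := wf) hcard
          (fun i _ => (σ.finite_dom.mem_toFinset).2 (hnd i))
      have key : ∀ s t : Fin (n+1), s < t → wf s = wf t →
          ∃ P' k', k' < σ.nb ∧ SChain σ u P' k' c := by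
        intro s t hst hw
        have hst' : s.1 < t.1 := hst
        have ht2 := t.2
        have hglue := schain_glue (h1f s) (by rw [hw]; exact h2f t)
        exact ih (s.1 + (k - t.1)) (by omega) _ hglue
      rcases Ne.lt_or_gt hne with h | h
      · exact key _ _ h heq
      · exact key _ _ h heq.symm

theorem schain_depth {σ : Subst Sig ar Vr} (hR : σ.IsRSubst) :
    ∀ (B : ℕ) {y u : Vr} {P : List ℕ} {K : ℕ}, SChain σ y P K u → u ∈ σ.dom →
      (B+1) * (σ.nb + 1) ≤ K → B + 1 ≤ P.length := by
  intro B
  induction B with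
  | zero =>
    intro y u P K hc hu hK
    rcases P with _ | ⟨a, P⟩
    · have h1 : 1 * (σ.nb + 1) = σ.nb + 1 := by ring
      rw [h1] at hK
      exact absurd (purevar_bound hR hc hu) (by omega)
    · simp
  | succ B ihB =>
    intro y u P K hc hu hK
    have hKlow : σ.nb + 1 ≤ K := by
      have h2 : 1 * (σ.nb + 1) ≤ (B+1+1) * (σ.nb+1) :=
        Nat.mul_le_mul_right _ (by omega)
      omega
    have hsplit : K = (σ.nb + 1) + (K - (σ.nb + 1)) := by omega
    rw [hsplit] at hc
    obtain ⟨p1, w, p2, rfl, hc1, hc2⟩ := schain_split hc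
    have hw : w ∈ σ.dom := by
      by_contra hnd
      obtain ⟨huw, -⟩ := schain_nondom_const hc2 hnd
      exact hnd (huw ▸ hu)
    have hp1 : 1 ≤ p1.length := by
      rcases p1 with _ | ⟨a, p1⟩
      · exact absurd (purevar_bound hR hc1 hw) (by omega)
      · simp
    have htail : B + 1 ≤ p2.length := by
      apply ihB hc2 hu
      have hmul : (B+1+1) * (σ.nb+1) = (σ.nb + 1) + (B+1) * (σ.nb+1) := by ring
      omega
    rw [List.length_append]
    omega

end Chains2
/- ===================== Divergence and count stability ===================== -/

section Chains3

variable {Sig : Type} {ar : Sig → ℕ} {Vr : Type}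

theorem schain_diverge {σ : Subst Sig ar Vr} :
    ∀ (k : ℕ) {u z : Vr} {P Q : List ℕ}, SChain σ u P k z → SChain σ u Q k z → P ≠ Q →
      ∃ k0 p0 c r1 w1 p1 r2 w2 p2,
        P = p0 ++ (r1 ++ p1) ∧ Q = p0 ++ (r2 ++ p2) ∧ r1 ≠ r2 ∧
        SChain σ u p0 k0 c ∧ OccAt (σ.toFun c) r1 w1 ∧ OccAt (σ.toFun c) r2 w2 ∧
        SChain σ w1 p1 (k - k0 - 1) z ∧ SChain σ w2 p2 (k - k0 - 1) z := by
  intro k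
  induction k with
  | zero =>
    intro u z P Q hP hQ hne
    rw [schain_zero_iff] at hP hQ
    exact absurd (hP.1.trans hQ.1.symm) hne
  | succ k ih =>
    intro u z P Q hP hQ hne
    rw [schain_succ_iff] at hP hQ
    obtain ⟨r1, w1, p1, rfl, ho1, hc1⟩ := hP
    obtain ⟨r2, w2, p2, hQeq, ho2, hc2⟩ := hQ
    subst hQeq
    by_cases hr : r1 = r2
    · subst hr
      have hww : w1 = w2 := occAt_functional ho1 ho2
      subst hww
      have hpp : p1 ≠ p2 := fun h => hne (by rw [h])
      obtain ⟨k0, p0, c, s1, v1, q1, s2, v2, q2, hP1, hP2, hsne, hc0, hov1, hov2, ht1, ht2⟩ :=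
        ih hc1 hc2 hpp
      refine ⟨k0 + 1, r1 ++ p0, c, s1, v1, q1, s2, v2, q2, ?_, ?_, hsne,
        SChain.cons ho1 hc0, hov1, hov2, ?_, ?_⟩
      · rw [hP1, List.append_assoc]
      · rw [hP2, List.append_assoc]
      · have he : k + 1 - (k0 + 1) - 1 = k - k0 - 1 := by omega
        rw [he]; exact ht1
      · have he : k + 1 - (k0 + 1) - 1 = k - k0 - 1 := by omega
        rw [he]; exact ht2
    · refine ⟨0, [], u, r1, w1, p1, r2, w2, p2, rfl, rfl, hr, SChain.nil u, ho1, ho2, ?_, ?_⟩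
      · have he : k + 1 - 0 - 1 = k := by omega
        rw [he]; exact hc1
      · have he : k + 1 - 0 - 1 = k := by omega
        rw [he]; exact hc2

theorem count_stab {σ : Subst Sig ar Vr} (hR : σ.IsRSubst) {z y : Vr} {K : ℕ}
    (hz : z ∉ σ.dom) (h2 : 2 ≤ (itv σ K y).count z) :
    2 ≤ (itv σ (2 * σ.nb) y).count z := by
  obtain ⟨P, Q, hne, hP, hQ⟩ := two_le_count_iff.1 h2
  rw [occAt_itv_iff] at hP hQ
  obtain ⟨k0, p0, c, r1, w1, p1, r2, w2, p2, hP1, hP2, hrne, hc0, ho1, ho2, ht1, ht2⟩ :=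
    schain_diverge K hP hQ hne
  set n := σ.nb with hn
  have hcd : c ∈ σ.dom := by
    by_contra hnd
    rw [toFun_eq_var hnd, occAt_var_iff] at ho1 ho2
    exact hrne (ho1.1.trans ho2.1.symm)
  obtain ⟨p0', k0', hk0', hc0'⟩ := schain_shorten_dom hcd _ _ hc0
  obtain ⟨p1', k1', hk1', ht1'⟩ := schain_shorten_nondom hz _ _ ht1
  obtain ⟨p2', k2', hk2', ht2'⟩ := schain_shorten_nondom hz _ _ ht2
  have build : ∀ (r : List ℕ) (w : Vr) (pt : List ℕ) (kt : ℕ), OccAt (σ.toFun c) r w →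
      SChain σ w pt kt z → kt ≤ n → OccAt (itv σ (2*n) y) (p0' ++ (r ++ pt)) z := by
    intro r w pt kt ho ht hkt
    have hchain : SChain σ y (p0' ++ (r ++ pt)) (k0' + (kt + 1)) z :=
      schain_glue hc0' (SChain.cons ho ht)
    have hpad := schain_glue hchain (schain_pad hz (2*n - (k0' + (kt + 1))))
    rw [List.append_nil] at hpad
    have harith : k0' + (kt + 1) + (2*n - (k0' + (kt + 1))) = 2*n := by omega
    rw [harith] at hpad
    exact occAt_itv_iff.2 hpad
  have hO1 := build r1 w1 p1' k1' ho1 ht1' hk1'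
  have hO2 := build r2 w2 p2' k2' ho2 ht2' hk2'
  apply two_le_count_iff.2
  refine ⟨_, _, ?_, hO1, hO2⟩
  intro hcon
  have h3 : r1 ++ p1' = r2 ++ p2' := List.append_cancel_left hcon
  exact occAt_append_ne ho1 ho2 hrne p1' p2' h3

theorem occAt_itv_mono {σ : Subst Sig ar Vr} {z y : Vr} {P : List ℕ} {k j : ℕ}
    (hz : z ∉ σ.dom) (h : OccAt (itv σ k y) P z) : OccAt (itv σ (k + j) y) P z := by
  rw [occAt_itv_iff] at h ⊢
  have h2 := schain_glue h (schain_pad hz j)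
  simpa using h2

theorem mem_vars_itv_mono {σ : Subst Sig ar Vr} {z y : Vr} {k j : ℕ}
    (hz : z ∉ σ.dom) (h : z ∈ (itv σ k y).vars) : z ∈ (itv σ (k+j) y).vars := by
  obtain ⟨P, hP⟩ := exists_occAt_of_mem_vars h
  exact occAt_mem_vars (occAt_itv_mono hz hP)

theorem stab {σ : Subst Sig ar Vr} {z y : Vr} {k : ℕ}
    (hz : z ∉ σ.dom) (h : z ∈ (itv σ k y).vars) : z ∈ (itv σ σ.nb y).vars := by
  obtain ⟨P, hP⟩ := exists_occAt_of_mem_vars h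
  rw [occAt_itv_iff] at hP
  obtain ⟨P', k', hk', hc⟩ := schain_shorten_nondom hz _ _ hP
  have h2 := schain_glue hc (schain_pad hz (σ.nb - k'))
  rw [List.append_nil, show k' + (σ.nb - k') = σ.nb by omega] at h2
  exact occAt_mem_vars (occAt_itv_iff.2 h2)

theorem itv_var_nondom {σ : Subst Sig ar Vr} (hR : σ.IsRSubst) {y z : Vr}
    (h : itv σ σ.nb y = HTerm.var z) : z ∉ σ.dom := by
  intro hzd
  have hocc : OccAt (itv σ σ.nb y) [] z := by rw [h]; exact OccAt.var z
  rw [occAt_itv_iff] at hocc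
  exact absurd (purevar_bound hR hocc hzd) (lt_irrefl _)

theorem itv_nondom {σ : Subst Sig ar Vr} {y : Vr} (h : y ∉ σ.dom) (k : ℕ) :
    itv σ k y = HTerm.var y := by
  induction k with
  | zero => rfl
  | succ k ih =>
    rw [itv, iterApp_succ_right, ← itv, ih]
    exact toFun_eq_var h

/-- the depth lemma: occurrences of domain variables in a deeply iterated term are deep -/
theorem dom_occ_deep {σ : Subst Sig ar Vr} (hR : σ.IsRSubst) {y u : Vr} {P : List ℕ}
    {B K : ℕ} (h : OccAt (itv σ K y) P u) (hu : u ∈ σ.dom)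
    (hK : (B+1) * (σ.nb + 1) ≤ K) : B + 1 ≤ P.length := by
  rw [occAt_itv_iff] at h
  exact schain_depth hR B h hu hK

end Chains3
/- ===================== Semantic infrastructure ===================== -/

section Semantics

variable {Sig : Type} {ar : Sig → ℕ} {Vr : Type}
variable {M : Interp Sig ar}

theorem eval_substApp_of_sat {σ : Subst Sig ar Vr} {ν : Vr → M.carrier}
    (hs : M.SatEqs ν (eqsOf σ)) (t : HTerm Sig ar Vr) :
    M.eval ν (t.substApp σ.toFun) = M.eval ν t := by
  induction t with
  | var x =>
    show M.eval ν (σ.toFun x) = M.eval ν (HTerm.var x)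
    by_cases hx : x ∈ σ.dom
    · exact (hs (HTerm.var x, σ.toFun x) ⟨x, hx, rfl⟩).symm
    · rw [toFun_eq_var hx]
  | app f ts ih =>
    show M.interp f (fun i => M.eval ν ((ts i).substApp σ.toFun)) =
      M.interp f (fun i => M.eval ν (ts i))
    congr 1
    funext i
    exact ih i

theorem eval_itv {σ : Subst Sig ar Vr} {ν : Vr → M.carrier}
    (hs : M.SatEqs ν (eqsOf σ)) (k : ℕ) (y : Vr) :
    M.eval ν (itv σ k y) = ν y := by
  induction k with
  | zero => rfl
  | succ k ih =>
    rw [itv, iterApp_succ_right, ← itv, eval_substApp_of_sat hs, ih]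

/-- descent: equal evaluations of the same term give equal values on all variables -/
theorem eval_eq_vars_eq (hid : M.SatisfiesIdentity) {ν ν' : Vr → M.carrier}
    {t : HTerm Sig ar Vr} (h : M.eval ν t = M.eval ν' t) :
    ∀ z ∈ t.vars, ν z = ν' z := by
  induction t with
  | var x =>
    intro z hz
    rcases hz with rfl
    exact h
  | app f ts ih =>
    intro z hz
    rcases Set.mem_iUnion.1 hz with ⟨i, hi⟩
    have hch : (fun j => M.eval ν (ts j)) = (fun j => M.eval ν' (ts j)) := hid.1 f _ _ h
    exact ih i (congrFun hch i) z hi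

/-- two distinguished rigid values -/
noncomputable def valA (M : Interp Sig ar) (a0 : Sig) (ha0 : ar a0 = 0) : M.carrier :=
  M.interp a0 (fun i => absurd i.isLt (by omega))

noncomputable def valB (M : Interp Sig ar) (a0 b0 : Sig) (ha0 : ar a0 = 0) : M.carrier :=
  M.interp b0 (fun _ => valA M a0 ha0)

theorem args_eq_of_ar_zero {g : Sig} (h : ar g = 0) (e1 e2 : Fin (ar g) → M.carrier) :
    e1 = e2 :=
  funext fun i => absurd i.isLt (by omega)

theorem valA_ne_valB (hid : M.SatisfiesIdentity) {a0 b0 : Sig} (hab : a0 ≠ b0)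
    (ha0 : ar a0 = 0) : valA M a0 ha0 ≠ valB M a0 b0 ha0 :=
  fun h => hid.2 a0 b0 _ _ hab h

theorem interp_eq_valA (hid : M.SatisfiesIdentity) {a0 : Sig} {ha0 : ar a0 = 0}
    {g : Sig} {e : Fin (ar g) → M.carrier} (h : M.interp g e = valA M a0 ha0) : g = a0 := by
  by_contra hc
  exact hid.2 g a0 _ _ hc h

theorem interp_eq_valB (hid : M.SatisfiesIdentity) {a0 b0 : Sig} {ha0 : ar a0 = 0}
    {g : Sig} {e : Fin (ar g) → M.carrier} (h : M.interp g e = valB M a0 b0 ha0) :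
    g = b0 := by
  by_contra hc
  exact hid.2 g b0 _ _ hc h

/-- the two-valuation simultaneous descent along an occurrence -/
theorem W2 (hid : M.SatisfiesIdentity) {ν ν' : Vr → M.carrier} {v : Vr} :
    ∀ (p : List ℕ) (t s : HTerm Sig ar Vr), OccAt t p v →
      M.eval ν t = M.eval ν s → M.eval ν' t = M.eval ν' s →
      (∃ q r ζ t', p = q ++ r ∧ OccAt s q ζ ∧ SubAt t q t' ∧ OccAt t' r v ∧
        ν ζ = M.eval ν t' ∧ ν' ζ = M.eval ν' t') ∨
      (∃ s', SubAt s p s' ∧ M.eval ν s' = ν v ∧ M.eval ν' s' = ν' v) := by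
  intro p
  induction p with
  | nil =>
    intro t s hocc h1 h2
    rw [occAt_nil_iff] at hocc
    subst hocc
    exact Or.inr ⟨s, SubAt.nil s, h1.symm, h2.symm⟩
  | cons i p ih =>
    intro t s hocc h1 h2
    cases hocc with
    | @app f ts i0 hi _ _ hchild =>
      cases s with
      | var ζ =>
        left
        exact ⟨[], i :: p, ζ, _, rfl, OccAt.var ζ, SubAt.nil _, OccAt.app _ hi hchild,
          h1.symm, h2.symm⟩
      | app g ss =>
        have hgf : f = g := by
          by_contra hc
          exact hid.2 f g _ _ hc h1
        subst hgf
        have he1 : (fun j => M.eval ν (ts j)) = (fun j => M.eval ν (ss j)) :=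
          hid.1 f _ _ h1
        have he2 : (fun j => M.eval ν' (ts j)) = (fun j => M.eval ν' (ss j)) :=
          hid.1 f _ _ h2
        rcases ih (ts ⟨i, hi⟩) (ss ⟨i, hi⟩) hchild (congrFun he1 _) (congrFun he2 _) with
          ⟨q, r, ζ, t', hpqr, hsq, hsub, hocc', hv1, hv2⟩ | ⟨s', hsub, hv1, hv2⟩
        · left
          exact ⟨i :: q, r, ζ, t', by rw [hpqr, List.cons_append], OccAt.app _ hi hsq,
            SubAt.app _ hi hsub, hocc', hv1, hv2⟩
        · right
          exact ⟨s', SubAt.app _ hi hsub, hv1, hv2⟩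

end Semantics
/- ===================== Transfer lemmas ===================== -/

section Transfer

variable {Sig : Type} {ar : Sig → ℕ} {Vr : Type}

theorem subAt_var_occAt {t : HTerm Sig ar Vr} {q : List ℕ} {ζ : Vr}
    (h : SubAt t q (HTerm.var ζ)) : OccAt t q ζ := by
  generalize hv : HTerm.var ζ = tv at h
  induction h with
  | nil t => rw [← hv]; exact OccAt.var ζ
  | app i hi hsub ih => exact OccAt.app i hi (ih hv)

/-- the "final variable" of the chain starting at `u` (meaningful on `fvars`) -/
noncomputable def etau (τ : Subst Sig ar Vr) : Vr → Vr := fun u =>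
  if h : ∃ z, itv τ τ.nb u = HTerm.var z then Classical.choose h else u

theorem mem_fvars_iff {τ : Subst Sig ar Vr} {u : Vr} :
    u ∈ τ.fvars ↔ ∃ z, itv τ τ.nb u = HTerm.var z := Iff.rfl

theorem etau_spec {τ : Subst Sig ar Vr} {u : Vr} (h : u ∈ τ.fvars) :
    itv τ τ.nb u = HTerm.var (etau τ u) := by
  rcases mem_fvars_iff.1 h with ⟨z, hz⟩
  rw [etau, dif_pos ⟨z, hz⟩]
  exact Classical.choose_spec (⟨z, hz⟩ : ∃ z, itv τ τ.nb u = HTerm.var z)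

theorem etau_nondom {τ : Subst Sig ar Vr} (hRτ : τ.IsRSubst) {u : Vr} (h : u ∈ τ.fvars) :
    etau τ u ∉ τ.dom :=
  itv_var_nondom hRτ (etau_spec h)

theorem mem_fvars_of_nondom {τ : Subst Sig ar Vr} {u : Vr} (h : u ∉ τ.dom) :
    u ∈ τ.fvars := ⟨u, itv_nondom h τ.nb⟩

theorem etau_of_nondom {τ : Subst Sig ar Vr} {u : Vr} (h : u ∉ τ.dom) :
    etau τ u = u := by
  have h2 := etau_spec (mem_fvars_of_nondom h)
  rw [itv_nondom h] at h2
  injection h2.symm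

variable {M : Interp Sig ar}

theorem val_etau {τ : Subst Sig ar Vr} {ν : Vr → M.carrier}
    (hsτ : M.SatEqs ν (eqsOf τ)) {u : Vr} (h : u ∈ τ.fvars) :
    ν u = ν (etau τ u) := by
  have e1 := eval_itv hsτ τ.nb u
  rw [etau_spec h] at e1
  exact e1.symm

/-- bundled hypotheses of the main theorem, relative to one model -/
structure Setting (M : Interp Sig ar) (σ τ : Subst Sig ar Vr) (a0 b0 : Sig) : Prop where
  hid : M.SatisfiesIdentity
  hab : a0 ≠ b0
  ha0 : ar a0 = 0
  hRσ : σ.IsRSubst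
  hRτ : τ.IsRSubst
  hext : ∀ ν : Vr → M.carrier, ∃ ν', (∀ x ∉ σ.dom, ν' x = ν x) ∧
          M.SatEqs ν' (eqsOf σ) ∧ M.SatEqs ν' (eqsOf τ)
  hext' : ∀ ν : Vr → M.carrier, ∃ ν', (∀ x ∉ τ.dom, ν' x = ν x) ∧
          M.SatEqs ν' (eqsOf σ) ∧ M.SatEqs ν' (eqsOf τ)

theorem Setting.symm {σ τ : Subst Sig ar Vr} {a0 b0 : Sig}
    (S : Setting M σ τ a0 b0) : Setting M τ σ a0 b0 := by
  refine ⟨S.hid, S.hab, S.ha0, S.hRτ, S.hRσ, ?_, ?_⟩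
  · intro ν
    obtain ⟨ν', h1, h2, h3⟩ := S.hext' ν
    exact ⟨ν', h1, h3, h2⟩
  · intro ν
    obtain ⟨ν', h1, h2, h3⟩ := S.hext ν
    exact ⟨ν', h1, h3, h2⟩

theorem fvars_sub {σ τ : Subst Sig ar Vr} {a0 b0 : Sig}
    (S : Setting M σ τ a0 b0) : σ.fvars ⊆ τ.fvars := by
  intro y hy
  obtain ⟨z, hz⟩ := hy
  have hz' : itv σ σ.nb y = HTerm.var z := hz
  by_contra hny
  obtain ⟨g, ss, hgss⟩ : ∃ g ss, itv τ τ.nb y = HTerm.app g ss := by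
    rcases hterm : itv τ τ.nb y with w | ⟨g, ss⟩
    · exact absurd (mem_fvars_iff.2 ⟨w, hterm⟩) hny
    · exact ⟨g, ss, rfl⟩
  have hznd : z ∉ σ.dom := itv_var_nondom S.hRσ hz'
  set D : M.carrier := if g = a0 then valB M a0 b0 S.ha0 else valA M a0 S.ha0 with hD
  obtain ⟨ν, hag, hsσ, hsτ⟩ := S.hext (fun _ => D)
  have hνz : ν z = D := hag z hznd
  have h1 : ν y = ν z := by
    have e1 := eval_itv hsσ σ.nb y
    rw [hz'] at e1
    exact e1.symm
  have h2 : M.interp g (fun j => M.eval ν (ss j)) = D := by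
    have e2 := eval_itv hsτ τ.nb y
    rw [hgss] at e2
    calc M.interp g (fun j => M.eval ν (ss j)) = ν y := e2
      _ = ν z := h1
      _ = D := hνz
  by_cases hga : g = a0
  · rw [hD, if_pos hga] at h2
    exact S.hid.2 g b0 _ _ (by rw [hga]; exact S.hab) h2
  · rw [hD, if_neg hga] at h2
    exact S.hid.2 g a0 _ _ hga h2

theorem etau_inj {σ τ : Subst Sig ar Vr} {a0 b0 : Sig} (S : Setting M σ τ a0 b0)
    {ξ1 ξ2 : Vr} (h1 : ξ1 ∉ σ.dom) (h2 : ξ2 ∉ σ.dom)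
    (he : etau τ ξ1 = etau τ ξ2) : ξ1 = ξ2 := by
  by_contra hne
  obtain ⟨ν, hag, hsσ, hsτ⟩ :=
    S.hext (fun u => if u = ξ1 then valA M a0 S.ha0 else valB M a0 b0 S.ha0)
  have hf1 : ξ1 ∈ τ.fvars := fvars_sub S (mem_fvars_of_nondom h1)
  have hf2 : ξ2 ∈ τ.fvars := fvars_sub S (mem_fvars_of_nondom h2)
  have hv1 : ν ξ1 = valA M a0 S.ha0 := by rw [hag ξ1 h1, if_pos rfl]
  have hv2 : ν ξ2 = valB M a0 b0 S.ha0 := by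
    rw [hag ξ2 h2, if_neg (fun hc => hne hc.symm)]
  have heq : ν ξ1 = ν ξ2 := by
    rw [val_etau hsτ hf1, val_etau hsτ hf2, he]
  rw [hv1, hv2] at heq
  exact valA_ne_valB S.hid S.hab S.ha0 heq

theorem etau_etau {σ τ : Subst Sig ar Vr} {a0 b0 : Sig} (S : Setting M σ τ a0 b0)
    {v : Vr} (hv : v ∉ σ.dom) : etau σ (etau τ v) = v := by
  set w := etau τ v with hw
  have hvfτ : v ∈ τ.fvars := fvars_sub S (mem_fvars_of_nondom hv)
  have hwndτ : w ∉ τ.dom := etau_nondom S.hRτ hvfτ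
  have hwfσ : w ∈ σ.fvars := fvars_sub S.symm (mem_fvars_of_nondom hwndτ)
  have hwσnd : etau σ w ∉ σ.dom := etau_nondom S.hRσ hwfσ
  by_contra hne
  obtain ⟨ν, hag, hsσ, hsτ⟩ :=
    S.hext (fun u => if u = v then valA M a0 S.ha0 else valB M a0 b0 S.ha0)
  have hv1 : ν v = valA M a0 S.ha0 := by rw [hag v hv, if_pos rfl]
  have hv2 : ν (etau σ w) = valB M a0 b0 S.ha0 := by
    rw [hag _ hwσnd, if_neg hne]
  have heq : ν v = ν (etau σ w) := by
    rw [val_etau hsτ hvfτ, ← hw, val_etau hsσ hwfσ]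
  rw [hv1, hv2] at heq
  exact valA_ne_valB S.hid S.hab S.ha0 heq

theorem rigA (hid : M.SatisfiesIdentity) {a0 : Sig} {ha0 : ar a0 = 0}
    {ν0 : Vr → M.carrier} {z0 : Vr} (hz0 : ν0 z0 ≠ valA M a0 ha0)
    {t : HTerm Sig ar Vr} {r : List ℕ} (ho : OccAt t r z0)
    (he : M.eval ν0 t = valA M a0 ha0) : False := by
  cases ho with
  | var => exact hz0 he
  | app i hi _ =>
    have hga := interp_eq_valA (ha0 := ha0) hid he
    subst hga
    omega

end Transfer
/- ===================== occ transfer (sharing groups) ===================== -/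

section OccTransfer

variable {Sig : Type} {ar : Sig → ℕ} {Vr : Type} {M : Interp Sig ar}

theorem occ_transfer {σ τ : Subst Sig ar Vr} {a0 b0 : Sig} (S : Setting M σ τ a0 b0)
    {v y : Vr} (hv : v ∉ σ.dom) (hocc : v ∈ (itv σ σ.nb y).vars) :
    etau τ v ∈ (itv τ τ.nb y).vars := by
  classical
  set w := etau τ v with hwdef
  have hvfτ : v ∈ τ.fvars := fvars_sub S (mem_fvars_of_nondom hv)
  have hwnd : w ∉ τ.dom := etau_nondom S.hRτ hvfτ
  by_contra hG
  obtain ⟨p, hp⟩ := exists_occAt_of_mem_vars hocc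
  set t : HTerm Sig ar Vr := itv σ σ.nb y with htdef
  set D1 : ℕ := hdepth t with hD1
  set K2 : ℕ := (D1+1) * (τ.nb + 1) with hK2
  set s : HTerm Sig ar Vr := itv τ K2 y with hsdef
  have hplen : p.length ≤ D1 := occAt_length_le_hdepth hp
  obtain ⟨ν, hag, hsσ, hsτ⟩ := S.hext' (fun _ => valA M a0 S.ha0)
  obtain ⟨ν', hag', hsσ', hsτ'⟩ := S.hext'
    (fun u => if u = w then valB M a0 b0 S.ha0 else valA M a0 S.ha0)
  have hνw : ν w = valA M a0 S.ha0 := hag w hwnd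
  have hν'w : ν' w = valB M a0 b0 S.ha0 := by rw [hag' w hwnd, if_pos rfl]
  have hνv : ν v = valA M a0 S.ha0 := by rw [val_etau hsτ hvfτ, ← hwdef, hνw]
  have hν'v : ν' v = valB M a0 b0 S.ha0 := by rw [val_etau hsτ' hvfτ, ← hwdef, hν'w]
  have hleaf : ∀ {q : List ℕ} {ζ : Vr}, OccAt s q ζ → q.length ≤ D1 →
      ζ ∉ τ.dom ∧ ζ ≠ w ∧ ν ζ = valA M a0 S.ha0 ∧ ν' ζ = valA M a0 S.ha0 := by
    intro q ζ hq hql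
    have hζnd : ζ ∉ τ.dom := by
      intro hd
      have hdeep := dom_occ_deep (B := D1) S.hRτ hq hd (le_of_eq hK2.symm)
      omega
    have hζw : ζ ≠ w := by
      intro he
      apply hG
      rw [← he]
      exact stab hζnd (occAt_mem_vars hq)
    exact ⟨hζnd, hζw, hag ζ hζnd, by rw [hag' ζ hζnd, if_neg hζw]⟩
  have h1 : M.eval ν t = M.eval ν s := by rw [htdef, hsdef, eval_itv hsσ, eval_itv hsτ]
  have h2 : M.eval ν' t = M.eval ν' s := by rw [htdef, hsdef, eval_itv hsσ', eval_itv hsτ']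
  rcases W2 S.hid p t s hp h1 h2 with
    ⟨q, r, ζ, t', hpqr, hsq, hsub, hocc', hv1, hv2⟩ | ⟨s', hsub, hv1, hv2⟩
  · have hql : q.length ≤ D1 := by
      have hlen := congrArg List.length hpqr
      rw [List.length_append] at hlen
      omega
    obtain ⟨hζnd, hζw, hzA, hz'A⟩ := hleaf hsq hql
    have hee : M.eval ν t' = M.eval ν' t' := by rw [← hv1, ← hv2, hzA, hz'A]
    have hvv := eval_eq_vars_eq S.hid hee v (occAt_mem_vars hocc')
    rw [hνv, hν'v] at hvv
    exact valA_ne_valB S.hid S.hab S.ha0 hvv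
  · cases s' with
    | var ζ0 =>
      have hq0 := subAt_var_occAt hsub
      obtain ⟨hζnd, hζw, hzA, hz'A⟩ := hleaf hq0 hplen
      have hcon : valA M a0 S.ha0 = valB M a0 b0 S.ha0 := by
        rw [← hz'A, ← hν'v]
        exact hv2
      exact valA_ne_valB S.hid S.hab S.ha0 hcon
    | app g ss =>
      have hva : M.interp g (fun j => M.eval ν (ss j)) = valA M a0 S.ha0 := by
        rw [← hνv]; exact hv1
      have hga : g = a0 := interp_eq_valA (ha0 := S.ha0) S.hid hva
      have harg : ar g = 0 := by rw [hga]; exact S.ha0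
      have heq : M.eval ν' (HTerm.app g ss) = M.eval ν (HTerm.app g ss) := by
        show M.interp g (fun j => M.eval ν' (ss j)) = M.interp g (fun j => M.eval ν (ss j))
        congr 1
        exact args_eq_of_ar_zero harg _ _
      have hcon : valB M a0 b0 S.ha0 = valA M a0 S.ha0 := by
        rw [← hν'v, ← hνv, ← hv2, ← hv1, heq]
      exact valA_ne_valB S.hid S.hab S.ha0 hcon.symm

theorem occ_eq {σ τ : Subst Sig ar Vr} {a0 b0 : Sig} (S : Setting M σ τ a0 b0)
    {v : Vr} (hv : v ∉ σ.dom) : σ.occ v = τ.occ (etau τ v) := by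
  have hvfτ : v ∈ τ.fvars := fvars_sub S (mem_fvars_of_nondom hv)
  have hwnd : etau τ v ∉ τ.dom := etau_nondom S.hRτ hvfτ
  ext y
  constructor
  · rintro ⟨h1, -⟩
    exact ⟨occ_transfer S hv h1, hwnd⟩
  · rintro ⟨h1, -⟩
    have h2 := occ_transfer S.symm hwnd h1
    rw [etau_etau S hv] at h2
    exact ⟨h2, hv⟩

theorem occ_empty_of_dom {σ : Subst Sig ar Vr} {v : Vr} (hv : v ∈ σ.dom) :
    σ.occ v = ∅ := by
  ext y
  simp [Subst.occ, hv]

theorem ssets_sub {σ τ : Subst Sig ar Vr} {a0 b0 : Sig} (S : Setting M σ τ a0 b0)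
    (VI : Set Vr) : σ.ssets VI ⊆ τ.ssets VI := by
  rintro g ⟨⟨v, rfl⟩, hne⟩
  have hv : v ∉ σ.dom := by
    intro hd
    exact hne (by rw [occ_empty_of_dom hd, Set.empty_inter])
  exact ⟨⟨etau τ v, by rw [occ_eq S hv]⟩, hne⟩

end OccTransfer
/- ===================== lvars transfer ===================== -/

section LvarsTransfer

variable {Sig : Type} {ar : Sig → ℕ} {Vr : Type} {M : Interp Sig ar}

theorem valB_inversion (hid : M.SatisfiesIdentity) {a0 b0 : Sig} {ha0 : ar a0 = 0}
    {g : Sig} {e : Fin (ar g) → M.carrier}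
    (h : M.interp g e = valB M a0 b0 ha0) : ∀ i, e i = valA M a0 ha0 := by
  have hgb : g = b0 := interp_eq_valB (ha0 := ha0) hid h
  subst hgb
  intro i
  have h2 := hid.1 g _ _ h
  exact congrFun h2 i

theorem lvars_transfer {σ τ : Subst Sig ar Vr} {a0 b0 : Sig} (S : Setting M σ τ a0 b0)
    {y : Vr} (hlin : y ∈ σ.lvars) : y ∈ τ.lvars := by
  classical
  intro z hzv hznd
  have h1 : 1 ≤ (itv τ (2 * τ.nb) y).count z := by
    apply one_le_count_iff.2
    have hmem : z ∈ (itv τ (2 * τ.nb) y).vars := by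
      have h2 := mem_vars_itv_mono (j := τ.nb) hznd hzv
      have he : τ.nb + τ.nb = 2 * τ.nb := by omega
      rwa [he] at h2
    exact exists_occAt_of_mem_vars hmem
  by_contra hc1
  have h2 : 2 ≤ (itv τ (2 * τ.nb) y).count z := by
    rcases Nat.lt_or_ge ((itv τ (2 * τ.nb) y).count z) 2 with h | h
    · exact absurd (by omega : (itv τ (2 * τ.nb) y).count z = 1) hc1
    · exact h
  obtain ⟨P1, P2, hPne, hP1, hP2⟩ := two_le_count_iff.1 h2
  set t : HTerm Sig ar Vr := itv τ (2 * τ.nb) y with htdef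
  set D0 : ℕ := hdepth t with hD0
  set K : ℕ := (D0+1) * (σ.nb + 1) with hK
  set s : HTerm Sig ar Vr := itv σ K y with hsdef
  obtain ⟨ν, hag, hsσ, hsτ⟩ := S.hext' (fun _ => valA M a0 S.ha0)
  obtain ⟨ν', hag', hsσ', hsτ'⟩ := S.hext'
    (fun u => if u = z then valB M a0 b0 S.ha0 else valA M a0 S.ha0)
  have hνz : ν z = valA M a0 S.ha0 := hag z hznd
  have hν'z : ν' z = valB M a0 b0 S.ha0 := by rw [hag' z hznd, if_pos rfl]
  have hν'zne : ν' z ≠ valA M a0 S.ha0 := by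
    rw [hν'z]
    exact fun hcc => valA_ne_valB S.hid S.hab S.ha0 hcc.symm
  have hvals : ∀ {η : Vr}, η ∉ τ.dom → η ≠ z →
      ν η = valA M a0 S.ha0 ∧ ν' η = valA M a0 S.ha0 :=
    fun hη hηz => ⟨hag _ hη, by rw [hag' _ hη, if_neg hηz]⟩
  have h1e : M.eval ν t = M.eval ν s := by rw [htdef, hsdef, eval_itv hsτ, eval_itv hsσ]
  have h2e : M.eval ν' t = M.eval ν' s := by rw [htdef, hsdef, eval_itv hsτ', eval_itv hsσ']
  have key : ∀ {P : List ℕ}, OccAt t P z → ∃ ξ, OccAt s P ξ ∧ ξ ∉ σ.dom ∧ etau τ ξ = z := by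
    intro P hP
    have hPlen : P.length ≤ D0 := occAt_length_le_hdepth hP
    have hsleaf : ∀ {q : List ℕ} {ξ : Vr}, OccAt s q ξ → q.length ≤ D0 → ξ ∉ σ.dom := by
      intro q ξ hq hql hd
      have hdeep := dom_occ_deep (B := D0) S.hRσ hq hd (le_of_eq hK.symm)
      omega
    rcases W2 S.hid P t s hP h1e h2e with
      ⟨q, r, ξ, t', hpqr, hsq, hsub, hocc', hw1, hw2⟩ | ⟨s', hsub, hw1, hw2⟩
    · have hql : q.length ≤ D0 := by
        have hlen := congrArg List.length hpqr
        rw [List.length_append] at hlen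
        omega
      have hξnd : ξ ∉ σ.dom := hsleaf hsq hql
      have hξfτ : ξ ∈ τ.fvars := fvars_sub S (mem_fvars_of_nondom hξnd)
      have hηnd : etau τ ξ ∉ τ.dom := etau_nondom S.hRτ hξfτ
      have hv'ξ : ν' ξ = ν' (etau τ ξ) := val_etau hsτ' hξfτ
      have hvξ : ν ξ = ν (etau τ ξ) := val_etau hsτ hξfτ
      by_cases hηz : etau τ ξ = z
      · rcases r with _ | ⟨j, r'⟩
        · rw [List.append_nil] at hpqr
          subst hpqr
          exact ⟨ξ, hsq, hξnd, hηz⟩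
        · exfalso
          have hv'B : M.eval ν' t' = valB M a0 b0 S.ha0 := by
            rw [← hw2, hv'ξ, hηz, hν'z]
          cases hocc' with
          | @app g ts' _ hj _ _ hchild =>
            have hchA : M.eval ν' (ts' ⟨j, hj⟩) = valA M a0 S.ha0 :=
              valB_inversion S.hid hv'B ⟨j, hj⟩
            exact rigA S.hid hν'zne hchild hchA
      · exfalso
        obtain ⟨hA1, hA2⟩ := hvals hηnd hηz
        have hee : M.eval ν t' = M.eval ν' t' := by
          rw [← hw1, ← hw2, hvξ, hv'ξ, hA1, hA2]
        have hzz := eval_eq_vars_eq S.hid hee z (occAt_mem_vars hocc')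
        rw [hνz, hν'z] at hzz
        exact valA_ne_valB S.hid S.hab S.ha0 hzz
    · cases s' with
      | var ξ =>
        have hq0 := subAt_var_occAt hsub
        have hξnd : ξ ∉ σ.dom := hsleaf hq0 hPlen
        have hξfτ : ξ ∈ τ.fvars := fvars_sub S (mem_fvars_of_nondom hξnd)
        have hηnd : etau τ ξ ∉ τ.dom := etau_nondom S.hRτ hξfτ
        refine ⟨ξ, hq0, hξnd, ?_⟩
        by_contra hηz
        obtain ⟨-, hA2⟩ := hvals hηnd hηz
        have hcon : valA M a0 S.ha0 = valB M a0 b0 S.ha0 := by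
          rw [← hA2, ← val_etau hsτ' hξfτ, ← hν'z]
          exact hw2
        exact absurd hcon (valA_ne_valB S.hid S.hab S.ha0)
      | app g ss =>
        exfalso
        have hva : M.interp g (fun j => M.eval ν (ss j)) = valA M a0 S.ha0 := by
          rw [← hνz]; exact hw1
        have hga : g = a0 := interp_eq_valA (ha0 := S.ha0) S.hid hva
        have harg : ar g = 0 := by rw [hga]; exact S.ha0
        have heq2 : M.eval ν' (HTerm.app g ss) = M.eval ν (HTerm.app g ss) := by
          show M.interp g (fun j => M.eval ν' (ss j)) = M.interp g (fun j => M.eval ν (ss j))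
          congr 1
          exact args_eq_of_ar_zero harg _ _
        have hcon : valB M a0 b0 S.ha0 = valA M a0 S.ha0 := by
          rw [← hν'z, ← hνz, ← hw2, ← hw1, heq2]
        exact absurd hcon.symm (valA_ne_valB S.hid S.hab S.ha0)
  obtain ⟨ξ1, hO1, hnd1, hz1⟩ := key hP1
  obtain ⟨ξ2, hO2, hnd2, hz2⟩ := key hP2
  have hξeq : ξ1 = ξ2 := etau_inj S hnd1 hnd2 (hz1.trans hz2.symm)
  subst hξeq
  have h2σ : 2 ≤ (itv σ K y).count ξ1 := two_le_count_iff.2 ⟨P1, P2, hPne, hO1, hO2⟩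
  have h2σ' := count_stab S.hRσ hnd1 h2σ
  have hmemn : ξ1 ∈ (itv σ σ.nb y).vars := stab hnd1 (occAt_mem_vars hO1)
  have hfin := hlin ξ1 hmemn hnd1
  have hfin' : (itv σ (2 * σ.nb) y).count ξ1 = 1 := hfin
  omega

end LvarsTransfer
/-- Let `T` be a syntactic equality theory and `σ, τ ∈ RSubst`
both satisfiable in `T`, with `T ⊢ ∀(σ ↔ τ)`. Then `α_S(σ) = α_S(τ)`. -/
theorem alphaS_eq_of_equiv
    {Sig Vr : Type} {ar : Sig → ℕ} [Denumerable Vr]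
    (_hSig : ∃ a b : Sig, a ≠ b ∧ ar a = 0)
    (VI : Set Vr) (_hVI : VI.Finite)
    (T : Set (Interp Sig ar)) (_hT : IsSyntacticTheory T)
    (σ τ : Subst Sig ar Vr) (_hσ : σ.IsRSubst) (_hτ : τ.IsRSubst)
    (_hsatσ : SatisfiableIn T σ) (_hsatτ : SatisfiableIn T τ)
    (_hequiv : EquivIn T σ τ) :
    alphaS VI σ = alphaS VI τ := by
  obtain ⟨a0, b0, hab, ha0⟩ := _hSig
  obtain ⟨⟨M, hM⟩, hidT⟩ := _hT
  have hid := hidT M hM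
  have hext : ∀ ν : Vr → M.carrier, ∃ ν', (∀ x ∉ σ.dom, ν' x = ν x) ∧
      M.SatEqs ν' (eqsOf σ) ∧ M.SatEqs ν' (eqsOf τ) := by
    intro ν
    obtain ⟨ν', h1, h2⟩ := _hsatσ M hM ν
    exact ⟨ν', h1, h2, (_hequiv M hM ν').1 h2⟩
  have hext' : ∀ ν : Vr → M.carrier, ∃ ν', (∀ x ∉ τ.dom, ν' x = ν x) ∧
      M.SatEqs ν' (eqsOf σ) ∧ M.SatEqs ν' (eqsOf τ) := by
    intro ν
    obtain ⟨ν', h1, h2⟩ := _hsatτ M hM ν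
    exact ⟨ν', h1, (_hequiv M hM ν').2 h2, h2⟩
  have S : Setting M σ τ a0 b0 := ⟨hid, hab, ha0, _hσ, _hτ, hext, hext'⟩
  have hfv : σ.fvars = τ.fvars :=
    Set.Subset.antisymm (fvars_sub S) (fvars_sub S.symm)
  have hss : σ.ssets VI = τ.ssets VI :=
    Set.Subset.antisymm (ssets_sub S VI) (ssets_sub S.symm VI)
  have hlv : σ.lvars = τ.lvars :=
    Set.Subset.antisymm (fun y hy => lvars_transfer S hy)
      (fun y hy => lvars_transfer S.symm hy)
  unfold alphaS
  rw [hfv, hss, hlv]
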